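/- Let G be a nilpotent group that is generated by a single conjugacy class X of G. Then G is cyclic. -/

import Mathlib

open scoped commutatorElement

lemma commEl_mul_right_central {G : Type*} [Group G] (a b c : G) (hb : b * c = c * b) :
    ⁅a * b, c⁆ = ⁅a, c⁆ := by
  have h : b * c * b⁻¹ = c := by rw [hb]; group
  calc ⁅a * b, c⁆ = a * (b * c * b⁻¹) * a⁻¹ * c⁻¹ := by group
    _ = a * c * a⁻¹ * c⁻¹ := by rw [h]
    _ = ⁅a, c⁆ := by group

lemma eq_top_of_sup_commutator_eq_top :
    ∀ (G : Type*) [Group G] [Group.IsNilpotent G],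
      ∀ H : Subgroup G, H ⊔ commutator G = ⊤ → H = ⊤ := by
  intro G _ _
  refine nilpotent_center_quotient_ind
    (P := fun G _ _ => ∀ H : Subgroup G, H ⊔ commutator G = ⊤ → H = ⊤) G
    (fun G _ _ H _ => (Subgroup.eq_top_iff' H).mpr fun x => by rw [Subsingleton.elim x 1]; exact H.one_mem) ?_
  intro G iG nG ih
  intro H hH
  set π := QuotientGroup.mk' (Subgroup.center G)
  have hπ : Function.Surjective π := QuotientGroup.mk'_surjective _
  have h1 : H.map π ⊔ commutator (G ⧸ Subgroup.center G) = ⊤ := by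
    have : commutator (G ⧸ Subgroup.center G) = (commutator G).map π := by
      rw [commutator_def, commutator_def, Subgroup.map_commutator,
        Subgroup.map_top_of_surjective _ hπ]
    rw [this, ← Subgroup.map_sup, hH, Subgroup.map_top_of_surjective _ hπ]
  have h2 : H.map π = ⊤ := ih _ h1
  have h3 : H ⊔ Subgroup.center G = ⊤ := by
    have := congrArg (Subgroup.comap π) h2
    rwa [Subgroup.comap_map_eq, QuotientGroup.ker_mk',
      Subgroup.comap_top] at this
  -- decompose any element as h * z
  have hdec : ∀ x : G, ∃ h ∈ H, ∃ z ∈ Subgroup.center G, x = h * z := by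
    intro x
    have hx : x ∈ H ⊔ Subgroup.center G := h3 ▸ Subgroup.mem_top x
    rw [← SetLike.mem_coe, Subgroup.mul_normal] at hx
    obtain ⟨h, hh, z, hz, hx⟩ := hx
    exact ⟨h, hh, z, hz, hx.symm⟩
  have hcomm : commutator G ≤ H := by
    rw [commutator_def, Subgroup.commutator_le]
    intro x _ y _
    obtain ⟨h₁, hh₁, z₁, hz₁, rfl⟩ := hdec x
    obtain ⟨h₂, hh₂, z₂, hz₂, rfl⟩ := hdec y
    have c₁ := Subgroup.mem_center_iff.mp hz₁
    have c₂ := Subgroup.mem_center_iff.mp hz₂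
    have e : ⁅h₁ * z₁, h₂ * z₂⁆ = ⁅h₁, h₂⁆ := by
      rw [commEl_mul_right_central h₁ z₁ (h₂ * z₂) ((c₁ (h₂ * z₂)).symm),
        ← commutatorElement_inv, commEl_mul_right_central h₂ z₂ h₁ ((c₂ h₁).symm),
        commutatorElement_inv]
    rw [e, commutatorElement_def]
    exact H.mul_mem (H.mul_mem (H.mul_mem hh₁ hh₂) (H.inv_mem hh₁)) (H.inv_mem hh₂)
  rw [← hH, sup_eq_left.mpr hcomm]

/-- A nilpotent group generated by a single conjugacy class is cyclic. -/
theorem isCyclic_of_nilpotent_closure_conjClass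
    {G : Type*} [Group G] [Group.IsNilpotent G] (g₀ : G)
    (hgen : Subgroup.closure {x : G | ∃ h : G, h * g₀ * h⁻¹ = x} = ⊤) :
    IsCyclic G := by
  have key : Subgroup.zpowers g₀ ⊔ commutator G = ⊤ := by
    rw [eq_top_iff, ← hgen, Subgroup.closure_le]
    rintro x ⟨h, rfl⟩
    have : h * g₀ * h⁻¹ = ⁅h, g₀⁆ * g₀ := by group
    rw [this]
    exact Subgroup.mul_mem _
      (Subgroup.mem_sup_right (Subgroup.commutator_mem_commutator (Subgroup.mem_top h) (Subgroup.mem_top g₀)))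
      (Subgroup.mem_sup_left (Subgroup.mem_zpowers g₀))
  have htop := eq_top_of_sup_commutator_eq_top G (Subgroup.zpowers g₀) key
  exact ⟨⟨g₀, fun x => by have : x ∈ Subgroup.zpowers g₀ := htop ▸ Subgroup.mem_top x; exact this⟩⟩
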